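/- Let D be a distribution on X, f : X → ℝ^d, and x, x⁺, x₁⁻, …, x_t⁻ i.i.d. draws from D. Let ℓ be the t-way hinge loss ℓ(v) = max(0, 1 + max_i(−v_i)). Then E[ℓ({⟨f(x), f(x⁺) − f(x_i⁻)⟩}_{i=1}^t)] − 1 ≤ c₀ · t · √(‖Σ(f)‖₂) · E_{x∼D}[‖f(x)‖] for an absolute constant c₀ (one may take c₀ = √2), where Σ(f) is the covariance matrix of f(x) under D. -/

import Mathlib

open Finset

-- marginalization
lemma marg {X : Type*} [Fintype X] [DecidableEq X] {t : ℕ} (p : X → ℝ)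
    (hp1 : ∑ x, p x = 1) (i : Fin t) (g : X → ℝ) :
    ∑ xs : Fin t → X, (∏ j, p (xs j)) * g (xs i) = ∑ y, p y * g y := by
  have key : ∀ xs : Fin t → X, (∏ j, p (xs j)) * g (xs i)
      = ∏ j, (if j = i then p (xs j) * g (xs j) else p (xs j)) := by
    intro xs
    have : ∀ j, (if j = i then p (xs j) * g (xs j) else p (xs j))
        = p (xs j) * (if j = i then g (xs j) else 1) := by
      intro j; split <;> simp
    simp only [this, Finset.prod_mul_distrib]
    rw [Finset.prod_ite_eq' Finset.univ i (fun j => g (xs j))]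
    simp
  simp only [key]
  rw [← Fintype.prod_sum (fun j y => if j = i then p y * g y else p y)]
  have : ∀ j : Fin t, (∑ y, if j = i then p y * g y else p y)
      = if j = i then (∑ y, p y * g y) else 1 := by
    intro j; split <;> simp [hp1]
  simp only [this]
  rw [Finset.prod_ite_eq' Finset.univ i (fun _ => ∑ y, p y * g y)]
  simp

lemma totalmass {X : Type*} [Fintype X] {t : ℕ} (p : X → ℝ) (hp1 : ∑ x, p x = 1) :
    ∑ xs : Fin t → X, (∏ j, p (xs j)) = 1 := by
  classical
  rw [← Fintype.prod_sum (fun _ y => p y)]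
  simp [hp1]
open RealInnerProductSpace

lemma cs_step {ι : Type*} [Fintype ι] (w a : ι → ℝ) (hw : ∀ i, 0 ≤ w i)
    (hw1 : ∑ i, w i = 1) :
    ∑ i, w i * |a i| ≤ Real.sqrt (∑ i, w i * a i ^ 2) := by
  have h := Finset.sum_mul_sq_le_sq_mul_sq Finset.univ
    (fun i => Real.sqrt (w i)) (fun i => Real.sqrt (w i) * |a i|)
  have e1 : ∀ i, Real.sqrt (w i) * (Real.sqrt (w i) * |a i|) = w i * |a i| := by
    intro i; rw [← mul_assoc, Real.mul_self_sqrt (hw i)]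
  have e2 : ∀ i, (Real.sqrt (w i) * |a i|) ^ 2 = w i * a i ^ 2 := by
    intro i; rw [mul_pow, Real.sq_sqrt (hw i), sq_abs]
  simp only [e1, e2, Real.sq_sqrt, hw] at h
  rw [hw1, one_mul] at h
  have h0 : 0 ≤ ∑ i, w i * |a i| :=
    Finset.sum_nonneg fun i _ => mul_nonneg (hw i) (abs_nonneg _)
  rw [show (∑ i, w i * |a i|) = Real.sqrt ((∑ i, w i * |a i|) ^ 2) by
    rw [Real.sqrt_sq h0]]
  exact Real.sqrt_le_sqrt h

lemma var_step {X : Type*} [Fintype X] (p a : X → ℝ) (hp1 : ∑ x, p x = 1)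
    (m : ℝ) (hm : m = ∑ y, p y * a y) :
    ∑ xp, ∑ y, p xp * p y * (a y - a xp) ^ 2
      = 2 * ∑ y, p y * (a y - m) ^ 2 := by
  have sub : ∀ c : ℝ, ∑ y, p y * (a y - c) ^ 2
      = (∑ y, p y * a y ^ 2) - 2 * c * m + c ^ 2 := by
    intro c
    have : ∀ y, p y * (a y - c) ^ 2
        = p y * a y ^ 2 - 2 * c * (p y * a y) + c ^ 2 * p y := by intro y; ring
    simp only [this, Finset.sum_add_distrib, Finset.sum_sub_distrib,
      ← Finset.mul_sum, hp1, hm]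
    ring
  have inner : ∀ xp, ∑ y, p xp * p y * (a y - a xp) ^ 2
      = p xp * ((∑ y, p y * a y ^ 2) - 2 * a xp * m + a xp ^ 2) := by
    intro xp
    rw [← sub (a xp), Finset.mul_sum]
    exact Finset.sum_congr rfl fun y _ => by ring
  simp only [inner]
  have : ∀ xp, p xp * ((∑ y, p y * a y ^ 2) - 2 * a xp * m + a xp ^ 2)
      = p xp * (∑ y, p y * a y ^ 2) - 2 * m * (p xp * a xp) + p xp * a xp ^ 2 := by
    intro xp; ring
  simp only [this, Finset.sum_add_distrib, Finset.sum_sub_distrib,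
    ← Finset.mul_sum, ← Finset.sum_mul, hp1, ← hm]
  rw [sub m]
  ring

lemma quad_step {d : ℕ} {X : Type*} [Fintype X] (p : X → ℝ)
    (f : X → EuclideanSpace ℝ (Fin d)) (μ : EuclideanSpace ℝ (Fin d))
    (Sig : Matrix (Fin d) (Fin d) ℝ)
    (hSig : ∀ i j, Sig i j = ∑ x, p x * ((f x i - μ i) * (f x j - μ j)))
    (u : EuclideanSpace ℝ (Fin d)) :
    ∑ y, p y * (⟪u, f y - μ⟫ : ℝ) ^ 2 = ⟪u, Matrix.toEuclideanLin Sig u⟫ := by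
  have hin : ∀ v w : EuclideanSpace ℝ (Fin d), (⟪v, w⟫ : ℝ) = ∑ i, v i * w i := by
    intro v w; simp [PiLp.inner_apply, RCLike.inner_apply, mul_comm]
  have hML : ∀ i, (Matrix.toEuclideanLin Sig u) i = ∑ j, Sig i j * u j := by
    intro i; simp [Matrix.toEuclideanLin_apply, Matrix.mulVec, dotProduct]
  have L : ∑ y, p y * (⟪u, f y - μ⟫ : ℝ) ^ 2
      = ∑ y, ∑ i, ∑ j, p y * (u i * (f y i - μ i)) * (u j * (f y j - μ j)) := by
    refine Finset.sum_congr rfl fun y _ => ?_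
    rw [hin u (f y - μ)]
    have expand : (∑ i, u i * (f y - μ) i) = ∑ i, u i * (f y i - μ i) :=
      Finset.sum_congr rfl fun i _ => by simp
    rw [expand, sq, Finset.sum_mul_sum]
    simp only [Finset.mul_sum]
    exact Finset.sum_congr rfl fun i _ => Finset.sum_congr rfl fun j _ => by ring
  have R : (⟪u, Matrix.toEuclideanLin Sig u⟫ : ℝ)
      = ∑ i, ∑ j, ∑ y, p y * (u i * (f y i - μ i)) * (u j * (f y j - μ j)) := by
    rw [hin u (Matrix.toEuclideanLin Sig u)]
    refine Finset.sum_congr rfl fun i _ => ?_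
    rw [hML i, Finset.mul_sum]
    refine Finset.sum_congr rfl fun j _ => ?_
    rw [hSig i j, Finset.sum_mul, Finset.mul_sum]
    exact Finset.sum_congr rfl fun y _ => by ring
  rw [L, R, Finset.sum_comm]
  exact Finset.sum_congr rfl fun i _ => Finset.sum_comm

lemma per_x {d : ℕ} {X : Type*} [Fintype X]
    (p : X → ℝ) (hp0 : ∀ x, 0 ≤ p x) (hp1 : ∑ x, p x = 1)
    (f : X → EuclideanSpace ℝ (Fin d))
    (μ : EuclideanSpace ℝ (Fin d)) (hμ : μ = ∑ x, p x • f x)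
    (Sig : Matrix (Fin d) (Fin d) ℝ)
    (hSig : ∀ i j, Sig i j = ∑ x, p x * ((f x i - μ i) * (f x j - μ j)))
    (u : EuclideanSpace ℝ (Fin d)) :
    ∑ xp, ∑ y, p xp * p y * |(⟪u, f y - f xp⟫ : ℝ)|
      ≤ Real.sqrt 2 *
        Real.sqrt ‖LinearMap.toContinuousLinearMap (Matrix.toEuclideanLin Sig)‖ * ‖u‖ := by
  set Q := LinearMap.toContinuousLinearMap (Matrix.toEuclideanLin Sig) with hQ
  set a : X → ℝ := fun y => ⟪u, f y⟫ with ha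
  have hsub : ∀ y xp : X, (⟪u, f y - f xp⟫ : ℝ) = a y - a xp := by
    intro y xp; simp [ha, inner_sub_right]
  have hm : (⟪u, μ⟫ : ℝ) = ∑ y, p y * a y := by
    rw [hμ, inner_sum]
    exact Finset.sum_congr rfl fun y _ => real_inner_smul_right u (f y) (p y)
  -- Cauchy-Schwarz over pairs
  have hw1 : ∑ z : X × X, p z.1 * p z.2 = 1 := by
    rw [Fintype.sum_prod_type]
    simp only [← Finset.mul_sum, hp1, mul_one]
  have hcs := cs_step (fun z : X × X => p z.1 * p z.2)
    (fun z : X × X => a z.2 - a z.1)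
    (fun z => mul_nonneg (hp0 _) (hp0 _)) hw1
  have lhs_eq : ∑ xp, ∑ y, p xp * p y * |(⟪u, f y - f xp⟫ : ℝ)|
      = ∑ z : X × X, (p z.1 * p z.2) * |a z.2 - a z.1| := by
    rw [Fintype.sum_prod_type]
    exact Finset.sum_congr rfl fun xp _ => Finset.sum_congr rfl fun y _ => by
      rw [hsub]
  have sq_eq : ∑ z : X × X, (p z.1 * p z.2) * (a z.2 - a z.1) ^ 2
      = 2 * ∑ y, p y * (a y - ⟪u, μ⟫) ^ 2 := by
    rw [Fintype.sum_prod_type]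
    exact var_step p a hp1 _ hm
  have ame : ∀ y, a y - (⟪u, μ⟫ : ℝ) = ⟪u, f y - μ⟫ := by
    intro y; simp [ha, inner_sub_right]
  have hqf : ∑ y, p y * (a y - (⟪u, μ⟫:ℝ)) ^ 2 = ⟪u, Q u⟫ := by
    simp only [ame]
    rw [quad_step p f μ Sig hSig u]
    congr 1
  have hqb : (⟪u, Q u⟫ : ℝ) ≤ ‖Q‖ * ‖u‖ ^ 2 := by
    calc (⟪u, Q u⟫ : ℝ) ≤ ‖u‖ * ‖Q u‖ := real_inner_le_norm u (Q u)
      _ ≤ ‖u‖ * (‖Q‖ * ‖u‖) := by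
          exact mul_le_mul_of_nonneg_left (Q.le_opNorm u) (norm_nonneg u)
      _ = ‖Q‖ * ‖u‖ ^ 2 := by ring
  calc ∑ xp, ∑ y, p xp * p y * |(⟪u, f y - f xp⟫ : ℝ)|
      = ∑ z : X × X, (p z.1 * p z.2) * |a z.2 - a z.1| := lhs_eq
    _ ≤ Real.sqrt (∑ z : X × X, (p z.1 * p z.2) * (a z.2 - a z.1) ^ 2) := hcs
    _ = Real.sqrt (2 * ⟪u, Q u⟫) := by rw [sq_eq, hqf]
    _ ≤ Real.sqrt (2 * (‖Q‖ * ‖u‖ ^ 2)) := by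
        apply Real.sqrt_le_sqrt; linarith
    _ = Real.sqrt 2 * Real.sqrt ‖Q‖ * ‖u‖ := by
        rw [Real.sqrt_mul (by norm_num : (0:ℝ) ≤ 2),
          Real.sqrt_mul (norm_nonneg Q), Real.sqrt_sq (norm_nonneg u), mul_assoc]

theorem class_collision_hinge
    {d : ℕ} {X : Type*} [Fintype X] (t : ℕ) (ht : 0 < t)
    (p : X → ℝ) (hp0 : ∀ x, 0 ≤ p x) (hp1 : ∑ x, p x = 1)
    (f : X → EuclideanSpace ℝ (Fin d))
    (μ : EuclideanSpace ℝ (Fin d)) (hμ : μ = ∑ x, p x • f x)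
    (Sig : Matrix (Fin d) (Fin d) ℝ)
    (hSig : ∀ i j, Sig i j = ∑ x, p x * ((f x i - μ i) * (f x j - μ j))) :
    (∑ x, ∑ xp, ∑ xs : Fin t → X, p x * p xp * (∏ i, p (xs i)) *
        max 0 (1 + Finset.univ.sup' ⟨⟨0, ht⟩, Finset.mem_univ _⟩
          (fun i => -⟪f x, f xp - f (xs i)⟫))) - 1
      ≤ Real.sqrt 2 * t *
        Real.sqrt ‖LinearMap.toContinuousLinearMap (Matrix.toEuclideanLin Sig)‖ *
        ∑ x, p x * ‖f x‖ := by
  classical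
  set Q := LinearMap.toContinuousLinearMap (Matrix.toEuclideanLin Sig) with hQ
  have W0 : ∀ (x xp : X) (xs : Fin t → X), 0 ≤ p x * p xp * ∏ i, p (xs i) :=
    fun x xp xs => mul_nonneg (mul_nonneg (hp0 x) (hp0 xp))
      (Finset.prod_nonneg fun i _ => hp0 _)
  -- pointwise bound on the loss
  have point : ∀ (x xp : X) (xs : Fin t → X),
      max 0 (1 + Finset.univ.sup' ⟨⟨0, ht⟩, Finset.mem_univ _⟩
          (fun i => -(⟪f x, f xp - f (xs i)⟫ : ℝ)))
        ≤ 1 + ∑ i : Fin t, |(⟪f x, f (xs i) - f xp⟫ : ℝ)| := by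
    intro x xp xs
    have habs : ∀ i : Fin t,
        -(⟪f x, f xp - f (xs i)⟫ : ℝ) = ⟪f x, f (xs i) - f xp⟫ := by
      intro i; rw [← inner_neg_right, neg_sub]
    have hS0 : 0 ≤ ∑ i : Fin t, |(⟪f x, f (xs i) - f xp⟫ : ℝ)| :=
      Finset.sum_nonneg fun i _ => abs_nonneg _
    have hsup : Finset.univ.sup' ⟨⟨0, ht⟩, Finset.mem_univ _⟩
        (fun i => -(⟪f x, f xp - f (xs i)⟫ : ℝ))
          ≤ ∑ i : Fin t, |(⟪f x, f (xs i) - f xp⟫ : ℝ)| := by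
      refine Finset.sup'_le _ _ fun i _ => ?_
      rw [habs i]
      exact le_trans (le_abs_self _)
        (Finset.single_le_sum (f := fun j : Fin t => |(⟪f x, f (xs j) - f xp⟫ : ℝ)|)
          (fun j _ => abs_nonneg _) (Finset.mem_univ i))
    exact max_le (by linarith) (by linarith)
  -- step 1: bound the triple sum
  have step1 : (∑ x, ∑ xp, ∑ xs : Fin t → X, p x * p xp * (∏ i, p (xs i)) *
        max 0 (1 + Finset.univ.sup' ⟨⟨0, ht⟩, Finset.mem_univ _⟩
          (fun i => -(⟪f x, f xp - f (xs i)⟫ : ℝ))))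
      ≤ ∑ x, ∑ xp, ∑ xs : Fin t → X, p x * p xp * (∏ i, p (xs i)) *
          (1 + ∑ i : Fin t, |(⟪f x, f (xs i) - f xp⟫ : ℝ)|) := by
    refine Finset.sum_le_sum fun x _ => Finset.sum_le_sum fun xp _ =>
      Finset.sum_le_sum fun xs _ => ?_
    exact mul_le_mul_of_nonneg_left (point x xp xs) (W0 x xp xs)
  -- total mass
  have mass : (∑ x, ∑ xp, ∑ xs : Fin t → X, p x * p xp * (∏ i, p (xs i))) = 1 := by
    have h1 : ∀ (x xp : X), (∑ xs : Fin t → X, p x * p xp * (∏ i, p (xs i)))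
        = p x * p xp := by
      intro x xp
      rw [← Finset.mul_sum, totalmass p hp1, mul_one]
    simp only [h1, ← Finset.mul_sum, hp1, mul_one]
  -- expand
  have expand : (∑ x, ∑ xp, ∑ xs : Fin t → X, p x * p xp * (∏ i, p (xs i)) *
          (1 + ∑ i : Fin t, |(⟪f x, f (xs i) - f xp⟫ : ℝ)|))
      = 1 + ∑ x, ∑ xp, ∑ xs : Fin t → X, p x * p xp * (∏ i, p (xs i)) *
          (∑ i : Fin t, |(⟪f x, f (xs i) - f xp⟫ : ℝ)|) := by
    simp only [mul_add, mul_one, Finset.sum_add_distrib, mass]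
  -- marginalize the extra term
  have marg_all : (∑ x, ∑ xp, ∑ xs : Fin t → X, p x * p xp * (∏ i, p (xs i)) *
          (∑ i : Fin t, |(⟪f x, f (xs i) - f xp⟫ : ℝ)|))
      = ∑ x, p x * ((t : ℝ) * ∑ xp, ∑ y, p xp * p y * |(⟪f x, f y - f xp⟫ : ℝ)|) := by
    refine Finset.sum_congr rfl fun x _ => ?_
    have inner_eq : ∀ xp : X, (∑ xs : Fin t → X, p x * p xp * (∏ i, p (xs i)) *
          (∑ i : Fin t, |(⟪f x, f (xs i) - f xp⟫ : ℝ)|))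
        = p x * (p xp * ((t : ℝ) * ∑ y, p y * |(⟪f x, f y - f xp⟫ : ℝ)|)) := by
      intro xp
      have e1 : ∀ xs : Fin t → X, p x * p xp * (∏ i, p (xs i)) *
            (∑ i : Fin t, |(⟪f x, f (xs i) - f xp⟫ : ℝ)|)
          = p x * p xp * ∑ i : Fin t, (∏ j, p (xs j)) * |(⟪f x, f (xs i) - f xp⟫ : ℝ)| := by
        intro xs
        rw [Finset.mul_sum, Finset.mul_sum]
        exact Finset.sum_congr rfl fun i _ => by ring
      simp only [e1]
      rw [← Finset.mul_sum, Finset.sum_comm]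
      have e2 : ∀ i : Fin t, (∑ xs : Fin t → X, (∏ j, p (xs j)) *
            |(⟪f x, f (xs i) - f xp⟫ : ℝ)|)
          = ∑ y, p y * |(⟪f x, f y - f xp⟫ : ℝ)| :=
        fun i => marg p hp1 i (fun y => |(⟪f x, f y - f xp⟫ : ℝ)|)
      simp only [e2]
      rw [Finset.sum_const, Finset.card_univ, Fintype.card_fin, nsmul_eq_mul]
      ring
    simp only [inner_eq]
    simp only [Finset.mul_sum]
    exact Finset.sum_congr rfl fun xp _ => Finset.sum_congr rfl fun y _ => by ring
  -- bound the extra term per x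
  have bound_x : (∑ x, p x * ((t : ℝ) * ∑ xp, ∑ y, p xp * p y * |(⟪f x, f y - f xp⟫ : ℝ)|))
      ≤ Real.sqrt 2 * t * Real.sqrt ‖Q‖ * ∑ x, p x * ‖f x‖ := by
    have h : ∀ x : X, p x * ((t : ℝ) * ∑ xp, ∑ y, p xp * p y * |(⟪f x, f y - f xp⟫ : ℝ)|)
        ≤ p x * ((t : ℝ) * (Real.sqrt 2 * Real.sqrt ‖Q‖ * ‖f x‖)) := by
      intro x
      refine mul_le_mul_of_nonneg_left (mul_le_mul_of_nonneg_left ?_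
        (Nat.cast_nonneg t)) (hp0 x)
      exact per_x p hp0 hp1 f μ hμ Sig hSig (f x)
    refine le_trans (Finset.sum_le_sum fun x _ => h x) ?_
    rw [Finset.mul_sum]
    exact le_of_eq (Finset.sum_congr rfl fun x _ => by ring)
  have := le_trans step1 (le_of_eq expand)
  rw [marg_all] at this
  linarith [bound_x]
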